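/- Let q ∈ (0,1], τ ∈ [0,1), c > 0, b = √(1 - q(1-τ)), and σ₁ = (1+c)(1-τ). Then the quantity λ* = (1/(1-b))·(1 - q/(2(1+c))) satisfies λ* > (1+c-q)/((1+c)(1-b)) and λ* < ((1+c-q)/((1+c)(1-b)))·(1/2 + (1/2)√(1 + 4(1+c)(1-b)/((1-τ)(1+c-q)²))). -/

import Mathlib

/-- The chosen learning rate `λ* = (1/(1-b))(1 - q/(2(1+c)))` lies in the valid range. -/
theorem lrate_in_range (q τ c : ℝ) (hq : q ∈ Set.Ioc (0 : ℝ) 1)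
    (hτ : τ ∈ Set.Ico (0 : ℝ) 1) (hc : 0 < c) :
    let b := Real.sqrt (1 - q * (1 - τ))
    let lam := (1 / (1 - b)) * (1 - q / (2 * (1 + c)))
    (1 + c - q) / ((1 + c) * (1 - b)) < lam ∧
    lam < ((1 + c - q) / ((1 + c) * (1 - b))) *
      (1 / 2 + (1 / 2) * Real.sqrt (1 + 4 * (1 + c) * (1 - b) / ((1 - τ) * (1 + c - q) ^ 2))) := by
  obtain ⟨hq0, hq1⟩ := hq
  obtain ⟨hτ0, hτ1⟩ := hτ
  intro b lam
  have hτ' : 0 < 1 - τ := by linarith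
  have hqτ : 0 < q * (1 - τ) := by positivity
  have hqτ1 : q * (1 - τ) ≤ 1 := by nlinarith
  have hb0 : 0 ≤ b := Real.sqrt_nonneg _
  have hb2 : b ^ 2 = 1 - q * (1 - τ) := Real.sq_sqrt (by linarith)
  have hb1 : b < 1 := by nlinarith
  have h1b : 0 < 1 - b := by linarith
  have hc1 : 0 < 1 + c := by linarith
  have hcq : 0 < 1 + c - q := by linarith
  constructor
  · show (1 + c - q) / ((1 + c) * (1 - b)) < (1 / (1 - b)) * (1 - q / (2 * (1 + c)))
    have hL : (1 / (1 - b)) * (1 - q / (2 * (1 + c)))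
        = (2 * (1 + c) - q) / ((2 * (1 + c)) * (1 - b)) := by
      field_simp
    rw [hL, div_lt_div_iff₀ (by positivity) (by positivity)]
    nlinarith [mul_pos (mul_pos hq0 hc1) h1b]
  · show (1 / (1 - b)) * (1 - q / (2 * (1 + c))) < _
    have key : 1 + q / (1 + c - q) <
        Real.sqrt (1 + 4 * (1 + c) * (1 - b) / ((1 - τ) * (1 + c - q) ^ 2)) := by
      rw [Real.lt_sqrt (by positivity)]
      have hbb : (1 - b) * (1 + b) = q * (1 - τ) := by nlinarith [hb2]
      have hXeq : 4 * (1 + c) * (1 - b) / ((1 - τ) * (1 + c - q) ^ 2)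
          = 4 * (1 + c) * q / ((1 + b) * (1 + c - q) ^ 2) := by
        rw [div_eq_div_iff (by positivity) (by positivity)]
        linear_combination 4 * (1 + c) * (1 + c - q) ^ 2 * hbb
      rw [hXeq]
      have hLL : (1 : ℝ) + q / (1 + c - q) = (1 + c) / (1 + c - q) := by
        field_simp
        ring
      have hRR : (1 : ℝ) + 4 * (1 + c) * q / ((1 + b) * (1 + c - q) ^ 2)
          = ((1 + b) * (1 + c - q) ^ 2 + 4 * (1 + c) * q) / ((1 + b) * (1 + c - q) ^ 2) := by
        field_simp
      rw [hLL, hRR, div_pow, div_lt_div_iff₀ (by positivity) (by positivity)]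
      have hkey : (1 + b) * (2 * (1 + c) - q) < 4 * (1 + c) := by nlinarith
      nlinarith [mul_lt_mul_of_pos_right hkey (mul_pos hq0 (pow_pos hcq 2))]
    have hA : 0 < (1 + c - q) / ((1 + c) * (1 - b)) := by positivity
    have hlam : (1 / (1 - b)) * (1 - q / (2 * (1 + c)))
        = ((1 + c - q) / ((1 + c) * (1 - b))) * (1 / 2 + (1 / 2) * (1 + q / (1 + c - q))) := by
      field_simp
      ring
    rw [hlam]
    exact mul_lt_mul_of_pos_left (by linarith) hA
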